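/- For integers n > c ≥ q ≥ 1, the bound (q−1)(n²−n) is attained: there exists a collection of directed graphs G_1, …, G_c on n common vertices with no rainbow S_{0,q} such that ∑_{i=1}^c e(G_i) = (q−1)(n²−n). -/

import Mathlib

/-- Sharpness of the bound `(q-1)(n²-n)` for collections with no rainbow `S_{0,q}`. -/
theorem exists_no_rainbow_out_star_sum_eq
    (n c q : ℕ) (hnc : n > c) (hcq : c ≥ q) (hq : q ≥ 1) :
    ∃ G : Fin c → Finset (Fin n × Fin n),
      (∀ i v, (v, v) ∉ G i) ∧
      (¬ ∃ (v : Fin n) (u : Fin q → Fin n) (ι : Fin q → Fin c),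
        Function.Injective u ∧ Function.Injective ι ∧
        ∀ j, u j ≠ v ∧ (v, u j) ∈ G (ι j)) ∧
      ∑ i, (G i).card = (q - 1) * (n ^ 2 - n) := by
  refine ⟨fun i => if i.val < q - 1 then Finset.univ.offDiag else ∅, ?_, ?_, ?_⟩
  · intro i v
    simp only
    split <;> simp
  · rintro ⟨v, u, ι, hu, hι, h⟩
    have hlt : ∀ j, (ι j).val < q - 1 := by
      intro j
      by_contra hj
      have := (h j).2
      simp [if_neg hj] at this
    -- build injection Fin q ↪ Fin (q-1)
    have : q ≤ q - 1 := by
      have : Function.Injective (fun j : Fin q => (⟨(ι j).val, hlt j⟩ : Fin (q - 1))) := by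
        intro a b hab
        apply hι
        have := congrArg Fin.val hab
        simpa [Fin.ext_iff] using this
      simpa using Fintype.card_le_of_injective _ this
    omega
  · have hcard : (Finset.univ.offDiag : Finset (Fin n × Fin n)).card = n ^ 2 - n := by
      rw [Finset.offDiag_card]
      simp [sq]
    have : ∑ i : Fin c, ((if i.val < q - 1 then (Finset.univ.offDiag : Finset (Fin n × Fin n)) else ∅)).card
        = ∑ i : Fin c, (if i.val < q - 1 then n ^ 2 - n else 0) := by
      refine Finset.sum_congr rfl fun i _ => ?_
      split <;> simp [hcard]
    rw [this, Finset.sum_ite, Finset.sum_const_zero, add_zero, Finset.sum_const, smul_eq_mul]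
    have hfc : (Finset.univ.filter (fun i : Fin c => i.val < q - 1)).card = q - 1 := by
      have hc : 0 < c := by omega
      rw [show q - 1 = (Finset.range (q - 1)).card from (Finset.card_range _).symm]
      apply Finset.card_nbij' (fun i : Fin c => i.val)
        (fun m => (⟨m % c, Nat.mod_lt _ hc⟩ : Fin c))
      · intro a ha
        simp only [Finset.mem_coe, Finset.mem_filter] at ha
        simpa using ha.2
      · intro m hm
        simp only [Finset.mem_coe, Finset.mem_range] at hm
        simp only [Finset.mem_coe, Finset.mem_filter, Finset.mem_univ, true_and]
        simpa [Nat.mod_eq_of_lt (by omega : m < c)] using hm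
      · intro a _
        simp [Nat.mod_eq_of_lt a.isLt]
      · intro m hm
        simp only [Finset.mem_coe, Finset.mem_range] at hm
        simp [Nat.mod_eq_of_lt (by omega : m < c)]
    rw [hfc, Nat.mul_comm]
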